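/- arXiv:1203.6025 — 8 statements merged into one kernel-verified Lean document; each statement's English description precedes it below -/
import Mathlib

section
/- Let D₃ ⊆ ℝ^{n₁} × ℝ^{n₂} × ℝ^{n₃} be a nonempty compact set and g : ℝ^{n₁} × ℝ^{n₂} × ℝ^{n₃} → ℝ be continuous. For u₃ in the projection π₃(D₃) = {u₃ | ∃ u₁ u₂, (u₁,u₂,u₃) ∈ D₃}, let h(u₃) := sSup { sInf { g(u₁,u₂,u₃) | (u₁,u₂,u₃) ∈ D₃ } | u₂ with ∃ u₁, (u₁,u₂,u₃) ∈ D₃ }, and let c₃ := sInf { h(u₃) | u₃ ∈ π₃(D₃) }. Assume the infimum c₃ is attained, i.e., h(u₃*) = c₃ for some u₃* ∈ π₃(D₃). Then for every real z: [∃ u₃, (∃ u₁ u₂, (u₁,u₂,u₃) ∈ D₃) ∧ ∀ u₂, ((∃ u₁, (u₁,u₂,u₃) ∈ D₃) → ∃ u₁, ((u₁,u₂,u₃) ∈ D₃ ∧ g(u₁,u₂,u₃) ≤ z))] if and only if z ≥ c₃. -/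
theorem stmt_2 (n₁ n₂ n₃ : ℕ)
    (D₃ : Set ((Fin n₁ → ℝ) × (Fin n₂ → ℝ) × (Fin n₃ → ℝ)))
    (hne : D₃.Nonempty) (hcomp : IsCompact D₃)
    (g : ((Fin n₁ → ℝ) × (Fin n₂ → ℝ) × (Fin n₃ → ℝ)) → ℝ) (hg : Continuous g)
    (h : (Fin n₃ → ℝ) → ℝ)
    (hh : ∀ u₃, h u₃ = sSup {r : ℝ | ∃ u₂, (∃ u₁, (u₁, u₂, u₃) ∈ D₃) ∧
      sInf {s : ℝ | ∃ u₁, (u₁, u₂, u₃) ∈ D₃ ∧ g (u₁, u₂, u₃) = s} = r})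
    (c₃ : ℝ)
    (hc₃ : c₃ = sInf {r : ℝ | ∃ u₃, (∃ u₁ u₂, (u₁, u₂, u₃) ∈ D₃) ∧ h u₃ = r})
    (hattained : ∃ u₃, (∃ u₁ u₂, (u₁, u₂, u₃) ∈ D₃) ∧ h u₃ = c₃) :
    ∀ z : ℝ,
      (∃ u₃, (∃ u₁ u₂, (u₁, u₂, u₃) ∈ D₃) ∧
        ∀ u₂, (∃ u₁, (u₁, u₂, u₃) ∈ D₃) →
          ∃ u₁, (u₁, u₂, u₃) ∈ D₃ ∧ g (u₁, u₂, u₃) ≤ z) ↔ z ≥ c₃ := by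
  intro z
  obtain ⟨pmax, hpmaxD, hmax⟩ := hcomp.exists_isMaxOn hne hg.continuousOn
  obtain ⟨pmin, hpminD, hmin⟩ := hcomp.exists_isMinOn hne hg.continuousOn
  -- bounds on elements of the inner-inf sets
  have hSmem : ∀ (u₂ : Fin n₂ → ℝ) (u₃ : Fin n₃ → ℝ) (s : ℝ),
      s ∈ {s : ℝ | ∃ u₁, (u₁, u₂, u₃) ∈ D₃ ∧ g (u₁, u₂, u₃) = s} →
      g pmin ≤ s ∧ s ≤ g pmax := by
    rintro u₂ u₃ s ⟨u₁, hm, rfl⟩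
    exact ⟨hmin hm, hmax hm⟩
  have hSbddBelow : ∀ (u₂ : Fin n₂ → ℝ) (u₃ : Fin n₃ → ℝ),
      BddBelow {s : ℝ | ∃ u₁, (u₁, u₂, u₃) ∈ D₃ ∧ g (u₁, u₂, u₃) = s} :=
    fun u₂ u₃ => ⟨g pmin, fun s hs => (hSmem u₂ u₃ s hs).1⟩
  -- the inner infimum is attained
  have hInfMem : ∀ (u₂ : Fin n₂ → ℝ) (u₃ : Fin n₃ → ℝ), (∃ u₁, (u₁, u₂, u₃) ∈ D₃) →
      sInf {s : ℝ | ∃ u₁, (u₁, u₂, u₃) ∈ D₃ ∧ g (u₁, u₂, u₃) = s} ∈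
        {s : ℝ | ∃ u₁, (u₁, u₂, u₃) ∈ D₃ ∧ g (u₁, u₂, u₃) = s} := by
    rintro u₂ u₃ ⟨u₁, hu₁⟩
    have hSeq : {s : ℝ | ∃ u₁, (u₁, u₂, u₃) ∈ D₃ ∧ g (u₁, u₂, u₃) = s}
        = g '' (D₃ ∩ {p | p.2 = (u₂, u₃)}) := by
      ext s
      constructor
      · rintro ⟨v, hv, hgv⟩
        exact ⟨(v, u₂, u₃), ⟨hv, rfl⟩, hgv⟩
      · rintro ⟨p, ⟨hp, hp2⟩, rfl⟩
        have he : (p.1, u₂, u₃) = p := by rw [← hp2]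
        exact ⟨p.1, by rw [he]; exact hp, by rw [he]⟩
    have hK : IsCompact (D₃ ∩ {p | p.2 = (u₂, u₃)}) :=
      hcomp.inter_right (isClosed_singleton.preimage continuous_snd)
    have hKne : (D₃ ∩ {p | p.2 = (u₂, u₃)}).Nonempty := ⟨(u₁, u₂, u₃), hu₁, rfl⟩
    rw [hSeq]
    exact (hK.image hg).sInf_mem (hKne.image g)
  -- the middle-sup sets are bounded above
  have hTbddAbove : ∀ u₃ : Fin n₃ → ℝ,
      BddAbove {r : ℝ | ∃ u₂, (∃ u₁, (u₁, u₂, u₃) ∈ D₃) ∧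
        sInf {s : ℝ | ∃ u₁, (u₁, u₂, u₃) ∈ D₃ ∧ g (u₁, u₂, u₃) = s} = r} := by
    intro u₃
    refine ⟨g pmax, ?_⟩
    rintro r ⟨u₂, hex, rfl⟩
    exact (hSmem u₂ u₃ _ (hInfMem u₂ u₃ hex)).2
  -- lower bound on h
  have hhlb : ∀ u₃ : Fin n₃ → ℝ, (∃ u₁ u₂, (u₁, u₂, u₃) ∈ D₃) → g pmin ≤ h u₃ := by
    rintro u₃ ⟨u₁, u₂, hm⟩
    rw [hh]
    have hmem : sInf {s : ℝ | ∃ u₁, (u₁, u₂, u₃) ∈ D₃ ∧ g (u₁, u₂, u₃) = s} ∈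
        {r : ℝ | ∃ u₂, (∃ u₁, (u₁, u₂, u₃) ∈ D₃) ∧
          sInf {s : ℝ | ∃ u₁, (u₁, u₂, u₃) ∈ D₃ ∧ g (u₁, u₂, u₃) = s} = r} :=
      ⟨u₂, ⟨u₁, hm⟩, rfl⟩
    exact le_trans (hSmem u₂ u₃ _ (hInfMem u₂ u₃ ⟨u₁, hm⟩)).1
      (le_csSup (hTbddAbove u₃) hmem)
  constructor
  · rintro ⟨u₃, hproj, hz⟩
    have hTle : h u₃ ≤ z := by
      rw [hh]
      obtain ⟨u₁0, u₂0, hm0⟩ := hproj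
      refine csSup_le ⟨_, ⟨u₂0, ⟨u₁0, hm0⟩, rfl⟩⟩ ?_
      rintro r ⟨u₂, hex, rfl⟩
      obtain ⟨u₁, hm, hle⟩ := hz u₂ hex
      exact le_trans (csInf_le (hSbddBelow u₂ u₃) ⟨u₁, hm, rfl⟩) hle
    have hc₃le : c₃ ≤ h u₃ := by
      rw [hc₃]
      refine csInf_le ⟨g pmin, ?_⟩ ⟨u₃, hproj, rfl⟩
      rintro r ⟨u₃', hproj', rfl⟩
      exact hhlb u₃' hproj'
    exact le_trans hc₃le hTle
  · intro hzc
    obtain ⟨u₃, hproj, hheq⟩ := hattained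
    refine ⟨u₃, hproj, ?_⟩
    rintro u₂ hex
    obtain ⟨u₁, hm, hgeq⟩ := hInfMem u₂ u₃ hex
    refine ⟨u₁, hm, ?_⟩
    have : sInf {s : ℝ | ∃ u₁, (u₁, u₂, u₃) ∈ D₃ ∧ g (u₁, u₂, u₃) = s} ≤ h u₃ := by
      rw [hh]
      exact le_csSup (hTbddAbove u₃) ⟨u₂, hex, rfl⟩
    rw [hgeq]
    exact le_trans this (hheq ▸ hzc)
end

section
/- Let D₃ ⊆ ℝ^{n₁} × ℝ^{n₂} × ℝ^{n₃} be a nonempty compact set and g : ℝ^{n₁} × ℝ^{n₂} × ℝ^{n₃} → ℝ be continuous. For u₃ in the projection π₃(D₃) = {u₃ | ∃ u₁ u₂, (u₁,u₂,u₃) ∈ D₃}, let h(u₃) := sSup { sInf { g(u₁,u₂,u₃) | (u₁,u₂,u₃) ∈ D₃ } | u₂ with ∃ u₁, (u₁,u₂,u₃) ∈ D₃ }, and let c₃ := sInf { h(u₃) | u₃ ∈ π₃(D₃) }. Assume the infimum c₃ is NOT attained, i.e., h(u₃) > c₃ for every u₃ ∈ π₃(D₃). Then for every real z: [∃ u₃,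 (∃ u₁ u₂, (u₁,u₂,u₃) ∈ D₃) ∧ ∀ u₂, ((∃ u₁, (u₁,u₂,u₃) ∈ D₃) → ∃ u₁, ((u₁,u₂,u₃) ∈ D₃ ∧ g(u₁,u₂,u₃) ≤ z))] if and only if z > c₃. -/
theorem stmt_3 (n₁ n₂ n₃ : ℕ)
    (D₃ : Set ((Fin n₁ → ℝ) × (Fin n₂ → ℝ) × (Fin n₃ → ℝ)))
    (hne : D₃.Nonempty) (hcomp : IsCompact D₃)
    (g : ((Fin n₁ → ℝ) × (Fin n₂ → ℝ) × (Fin n₃ → ℝ)) → ℝ) (hg : Continuous g)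
    (h : (Fin n₃ → ℝ) → ℝ)
    (hh : ∀ u₃, h u₃ = sSup {r : ℝ | ∃ u₂, (∃ u₁, (u₁, u₂, u₃) ∈ D₃) ∧
      sInf {s : ℝ | ∃ u₁, (u₁, u₂, u₃) ∈ D₃ ∧ g (u₁, u₂, u₃) = s} = r})
    (c₃ : ℝ)
    (hc₃ : c₃ = sInf {r : ℝ | ∃ u₃, (∃ u₁ u₂, (u₁, u₂, u₃) ∈ D₃) ∧ h u₃ = r})
    (hnotattained : ∀ u₃, (∃ u₁ u₂, (u₁, u₂, u₃) ∈ D₃) → h u₃ > c₃) :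
    ∀ z : ℝ,
      (∃ u₃, (∃ u₁ u₂, (u₁, u₂, u₃) ∈ D₃) ∧
        ∀ u₂, (∃ u₁, (u₁, u₂, u₃) ∈ D₃) →
          ∃ u₁, (u₁, u₂, u₃) ∈ D₃ ∧ g (u₁, u₂, u₃) ≤ z) ↔ z > c₃ := by
  intro z
  obtain ⟨lo, hlo⟩ := (hcomp.image hg).bddBelow
  obtain ⟨hi, hhi⟩ := (hcomp.image hg).bddAbove
  have hlo' : ∀ x ∈ D₃, lo ≤ g x := fun x hx => hlo ⟨x, hx, rfl⟩
  have hhi' : ∀ x ∈ D₃, g x ≤ hi := fun x hx => hhi ⟨x, hx, rfl⟩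
  -- the inner infimum is attained
  have hinf : ∀ u₂ u₃, (∃ u₁, (u₁, u₂, u₃) ∈ D₃) →
      ∃ u₁, (u₁, u₂, u₃) ∈ D₃ ∧
        g (u₁, u₂, u₃) = sInf {s : ℝ | ∃ u₁, (u₁, u₂, u₃) ∈ D₃ ∧ g (u₁, u₂, u₃) = s} := by
    rintro u₂ u₃ ⟨u₁0, hu₁0⟩
    set K : Set (Fin n₁ → ℝ) := {u₁ | (u₁, u₂, u₃) ∈ D₃} with hKdef
    have hcont : Continuous (fun u₁ : Fin n₁ → ℝ => ((u₁, u₂, u₃) :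
        (Fin n₁ → ℝ) × (Fin n₂ → ℝ) × (Fin n₃ → ℝ))) :=
      continuous_id.prodMk continuous_const
    have hKc : IsClosed K := hcomp.isClosed.preimage hcont
    have hKsub : K ⊆ Prod.fst '' D₃ := fun u₁ hu₁ => ⟨(u₁, u₂, u₃), hu₁, rfl⟩
    have hK : IsCompact K := (hcomp.image continuous_fst).of_isClosed_subset hKc hKsub
    obtain ⟨u₁, hu₁, hmin⟩ := hK.exists_isMinOn ⟨u₁0, hu₁0⟩ ((hg.comp hcont).continuousOn)
    refine ⟨u₁, hu₁, le_antisymm ?_ ?_⟩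
    · refine le_csInf ⟨_, u₁0, hu₁0, rfl⟩ ?_
      rintro s ⟨u₁', hu₁', rfl⟩
      exact isMinOn_iff.mp hmin u₁' hu₁'
    · exact csInf_le ⟨lo, by rintro s ⟨u₁', hu₁', rfl⟩; exact hlo' _ hu₁'⟩ ⟨u₁, hu₁, rfl⟩
  -- the set defining h u₃ is bounded above
  have hTbdd : ∀ u₃, BddAbove {r : ℝ | ∃ u₂, (∃ u₁, (u₁, u₂, u₃) ∈ D₃) ∧
      sInf {s : ℝ | ∃ u₁, (u₁, u₂, u₃) ∈ D₃ ∧ g (u₁, u₂, u₃) = s} = r} := by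
    intro u₃
    refine ⟨hi, ?_⟩
    rintro r ⟨u₂, hex, rfl⟩
    obtain ⟨u₁, hu₁, heq⟩ := hinf u₂ u₃ hex
    rw [← heq]
    exact hhi' _ hu₁
  -- h is bounded below by lo on the projection
  have hhlb : ∀ u₃, (∃ u₁ u₂, (u₁, u₂, u₃) ∈ D₃) → lo ≤ h u₃ := by
    rintro u₃ ⟨u₁, u₂, hmem⟩
    rw [hh]
    have hr : lo ≤ sInf {s : ℝ | ∃ u₁, (u₁, u₂, u₃) ∈ D₃ ∧ g (u₁, u₂, u₃) = s} := by
      refine le_csInf ⟨_, u₁, hmem, rfl⟩ ?_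
      rintro s ⟨u₁', h', rfl⟩
      exact hlo' _ h'
    exact hr.trans (le_csSup (hTbdd u₃) ⟨u₂, ⟨u₁, hmem⟩, rfl⟩)
  have hUne : {r : ℝ | ∃ u₃, (∃ u₁ u₂, (u₁, u₂, u₃) ∈ D₃) ∧ h u₃ = r}.Nonempty := by
    obtain ⟨⟨u₁, u₂, u₃⟩, hx⟩ := hne
    exact ⟨h u₃, u₃, ⟨u₁, u₂, hx⟩, rfl⟩
  constructor
  · rintro ⟨u₃, hex, hall⟩
    have hle : h u₃ ≤ z := by
      rw [hh]
      obtain ⟨u₁, u₂, hmem⟩ := hex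
      refine csSup_le ⟨_, u₂, ⟨u₁, hmem⟩, rfl⟩ ?_
      rintro r ⟨u₂', hex', rfl⟩
      obtain ⟨u₁', hmem', hgle⟩ := hall u₂' hex'
      exact le_trans (csInf_le ⟨lo, by rintro s ⟨u₁'', h'', rfl⟩; exact hlo' _ h''⟩
        ⟨u₁', hmem', rfl⟩) hgle
    exact lt_of_lt_of_le (hnotattained u₃ hex) hle
  · intro hz
    have : sInf {r : ℝ | ∃ u₃, (∃ u₁ u₂, (u₁, u₂, u₃) ∈ D₃) ∧ h u₃ = r} < z := by
      rw [← hc₃]; exact hz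
    obtain ⟨r, ⟨u₃, hex, rfl⟩, hrz⟩ := exists_lt_of_csInf_lt hUne this
    refine ⟨u₃, hex, ?_⟩
    intro u₂ hex₂
    obtain ⟨u₁, hmem, heq⟩ := hinf u₂ u₃ hex₂
    refine ⟨u₁, hmem, ?_⟩
    rw [heq]
    have : sInf {s : ℝ | ∃ u₁, (u₁, u₂, u₃) ∈ D₃ ∧ g (u₁, u₂, u₃) = s} ≤ h u₃ := by
      rw [hh]
      exact le_csSup (hTbdd u₃) ⟨u₂, hex₂, rfl⟩
    exact this.trans hrz.le
end

section
/- Let δ = 0.015 and ε = 0.06. Let t ∈ [0,20], let t₁ ≤ t₂ ≤ t₃ ≤ t₄ and s₁ ≤ s₂ ≤ s₃ ≤ s₄ be two nondecreasing quadruples of reals with |tᵢ − sᵢ| ≤ δ for i = 1,2,3,4, and let v₀, w₀ be reals with |v₀ − w₀| ≤ ε. Then |(v₀ + V_in(t; t₁,t₂,t₃,t₄)) − (w₀ + V_in(t; s₁,s₂,s₃,s₄))| ≤ 8.8·δ + ε, and 8.8·δ + ε < 0.2. -/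
lemma min_lip (t a b : ℝ) : |min t a - min t b| ≤ |a - b| := by
  have := abs_min_sub_min_le_max t a t b
  simpa using this

/-- Volume of oil pumped in by time `t` with two activations during `[t₁,t₂] ∪ [t₃,t₄]`
at rate 2.2 l/s. -/
noncomputable def Vin (t t₁ t₂ t₃ t₄ : ℝ) : ℝ :=
  2.2 * ((min t t₂ - min t t₁) + (min t t₄ - min t t₃))

theorem stmt_6 (t t₁ t₂ t₃ t₄ s₁ s₂ s₃ s₄ v₀ w₀ : ℝ)
    (ht : 0 ≤ t ∧ t ≤ 20)
    (ht12 : t₁ ≤ t₂) (ht23 : t₂ ≤ t₃) (ht34 : t₃ ≤ t₄)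
    (hs12 : s₁ ≤ s₂) (hs23 : s₂ ≤ s₃) (hs34 : s₃ ≤ s₄)
    (h1 : |t₁ - s₁| ≤ 0.015) (h2 : |t₂ - s₂| ≤ 0.015)
    (h3 : |t₃ - s₃| ≤ 0.015) (h4 : |t₄ - s₄| ≤ 0.015)
    (hv : |v₀ - w₀| ≤ 0.06) :
    |(v₀ + Vin t t₁ t₂ t₃ t₄) - (w₀ + Vin t s₁ s₂ s₃ s₄)| ≤ 8.8 * 0.015 + 0.06 ∧
    (8.8 : ℝ) * 0.015 + 0.06 < 0.2 := by
  constructor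
  · have m1 := (min_lip t t₁ s₁).trans h1
    have m2 := (min_lip t t₂ s₂).trans h2
    have m3 := (min_lip t t₃ s₃).trans h3
    have m4 := (min_lip t t₄ s₄).trans h4
    rw [abs_le] at m1 m2 m3 m4 hv ⊢
    unfold Vin
    constructor <;> nlinarith [m1.1, m1.2, m2.1, m2.2, m3.1, m3.2, m4.1, m4.2, hv.1, hv.2]
  · norm_num
end

section
/- Let 0 ≤ t₁ ≤ t₂ ≤ t₃ ≤ t₄ ≤ 20 and v₀ ∈ ℝ. Define v(t) = v₀ + V_in(t; t₁,t₂,t₃,t₄) − V_out(t) for t ∈ [0,20], where V_out is the nominal consumption function. Then (1/20)·∫₀²⁰ v(t) dt = (20·v₀ + 1.1·(t₁² − t₂² + t₃² − t₄² − 40·t₁ + 40·t₂ − 40·t₃ + 40·t₄) − 132.2)/20. -/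
/-- The nominal consumption function (continuous piecewise linear, `Vout 0 = 0`). -/
noncomputable def Vout (t : ℝ) : ℝ :=
  if t ≤ 2 then 0
  else if t ≤ 4 then 1.2 * (t - 2)
  else if t ≤ 8 then 2.4
  else if t ≤ 10 then 2.4 + 1.2 * (t - 8)
  else if t ≤ 12 then 4.8 + 2.5 * (t - 10)
  else if t ≤ 14 then 9.8
  else if t ≤ 16 then 9.8 + 1.7 * (t - 14)
  else if t ≤ 18 then 13.2 + 0.5 * (t - 16)
  else 14.2

lemma cont_Vout : Continuous Vout := by
  unfold Vout
  apply Continuous.if_le _ _ continuous_id continuous_const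
  · intro x hx; subst hx; norm_num
  · fun_prop
  apply Continuous.if_le _ _ continuous_id continuous_const
  · intro x hx; subst hx; norm_num
  · fun_prop
  apply Continuous.if_le _ _ continuous_id continuous_const
  · intro x hx; subst hx; norm_num
  · fun_prop
  apply Continuous.if_le _ _ continuous_id continuous_const
  · intro x hx; subst hx; norm_num
  · fun_prop
  apply Continuous.if_le _ _ continuous_id continuous_const
  · intro x hx; subst hx; norm_num
  · fun_prop
  apply Continuous.if_le _ _ continuous_id continuous_const
  · intro x hx; subst hx; norm_num
  · fun_prop
  apply Continuous.if_le _ _ continuous_id continuous_const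
  · intro x hx; subst hx; norm_num
  · fun_prop
  apply Continuous.if_le _ _ continuous_id continuous_const
  · intro x hx; subst hx; norm_num
  · fun_prop
  · fun_prop

lemma intmin (a : ℝ) (h0 : 0 ≤ a) (h20 : a ≤ 20) :
    ∫ t in (0:ℝ)..20, min t a = 20 * a - a ^ 2 / 2 := by
  have cont : Continuous fun t : ℝ => min t a := continuous_id.min continuous_const
  rw [← intervalIntegral.integral_add_adjacent_intervals (a := (0:ℝ)) (b := a) (c := 20)
    (cont.intervalIntegrable _ _) (cont.intervalIntegrable _ _)]
  have h1 : (∫ t in (0:ℝ)..a, min t a) = ∫ t in (0:ℝ)..a, t := by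
    apply intervalIntegral.integral_congr
    intro t ht
    rw [Set.uIcc_of_le h0] at ht
    exact min_eq_left ht.2
  have h2 : (∫ t in a..(20:ℝ), min t a) = ∫ t in a..(20:ℝ), a := by
    apply intervalIntegral.integral_congr
    intro t ht
    rw [Set.uIcc_of_le h20] at ht
    exact min_eq_right ht.1
  rw [h1, h2, integral_id, intervalIntegral.integral_const]
  simp; ring

lemma intlin (a b c d : ℝ) :
    ∫ t in a..b, (c + d * (t - a)) = c * (b - a) + d * (b - a) ^ 2 / 2 := by
  have he : (fun t : ℝ => c + d * (t - a)) = fun t => (c - d * a) + d * t := by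
    funext t; ring
  rw [he, intervalIntegral.integral_add ((continuous_const).intervalIntegrable _ _)
    (((by fun_prop : Continuous fun t : ℝ => d * t)).intervalIntegrable _ _),
    intervalIntegral.integral_const, intervalIntegral.integral_const_mul, integral_id]
  simp; ring

lemma intVout : ∫ t in (0:ℝ)..20, Vout t = 132.2 := by
  have ii : ∀ a b : ℝ, IntervalIntegrable Vout MeasureTheory.volume a b :=
    fun a b => cont_Vout.intervalIntegrable a b
  have piece : ∀ (a b c d : ℝ), a ≤ b →
      (∀ t ∈ Set.Icc a b, Vout t = c + d * (t - a)) →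
      ∫ t in a..b, Vout t = c * (b - a) + d * (b - a) ^ 2 / 2 := by
    intro a b c d hab h
    rw [intervalIntegral.integral_congr (g := fun t => c + d * (t - a))
      (by rw [Set.uIcc_of_le hab]; exact h), intlin]
  have e1 : ∫ t in (0:ℝ)..2, Vout t = 0 := by
    have := piece 0 2 0 0 (by norm_num) ?_
    · simpa using this
    · intro t ht; simp only [Set.mem_Icc] at ht; unfold Vout
      rw [if_pos ht.2]; ring
  have e2 : ∫ t in (2:ℝ)..4, Vout t = 2.4 := by
    have := piece 2 4 0 1.2 (by norm_num) ?_
    · rw [this]; norm_num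
    · intro t ht; simp only [Set.mem_Icc] at ht; unfold Vout
      rcases eq_or_lt_of_le ht.1 with h | h
      · rw [if_pos h.symm.le]; rw [← h]; ring
      · rw [if_neg (by linarith), if_pos ht.2]; ring
  have e3 : ∫ t in (4:ℝ)..8, Vout t = 9.6 := by
    have := piece 4 8 2.4 0 (by norm_num) ?_
    · rw [this]; norm_num
    · intro t ht; simp only [Set.mem_Icc] at ht; unfold Vout
      rcases eq_or_lt_of_le ht.1 with h | h
      · rw [if_neg (by linarith), if_pos (by linarith)]; rw [← h]; norm_num
      · rw [if_neg (by linarith), if_neg (by linarith), if_pos ht.2]; ring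
  have e4 : ∫ t in (8:ℝ)..10, Vout t = 7.2 := by
    have := piece 8 10 2.4 1.2 (by norm_num) ?_
    · rw [this]; norm_num
    · intro t ht; simp only [Set.mem_Icc] at ht; unfold Vout
      rcases eq_or_lt_of_le ht.1 with h | h
      · rw [if_neg (by linarith), if_neg (by linarith), if_pos (by linarith)]
        rw [← h]; norm_num
      · rw [if_neg (by linarith), if_neg (by linarith), if_neg (by linarith), if_pos ht.2]
  have e5 : ∫ t in (10:ℝ)..12, Vout t = 14.6 := by
    have := piece 10 12 4.8 2.5 (by norm_num) ?_
    · rw [this]; norm_num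
    · intro t ht; simp only [Set.mem_Icc] at ht; unfold Vout
      rcases eq_or_lt_of_le ht.1 with h | h
      · rw [if_neg (by linarith), if_neg (by linarith), if_neg (by linarith),
          if_pos (by linarith)]; rw [← h]; norm_num
      · rw [if_neg (by linarith), if_neg (by linarith), if_neg (by linarith),
          if_neg (by linarith), if_pos ht.2]
  have e6 : ∫ t in (12:ℝ)..14, Vout t = 19.6 := by
    have := piece 12 14 9.8 0 (by norm_num) ?_
    · rw [this]; norm_num
    · intro t ht; simp only [Set.mem_Icc] at ht; unfold Vout
      rcases eq_or_lt_of_le ht.1 with h | h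
      · rw [if_neg (by linarith), if_neg (by linarith), if_neg (by linarith),
          if_neg (by linarith), if_pos (by linarith)]; rw [← h]; norm_num
      · rw [if_neg (by linarith), if_neg (by linarith), if_neg (by linarith),
          if_neg (by linarith), if_neg (by linarith), if_pos ht.2]; ring
  have e7 : ∫ t in (14:ℝ)..16, Vout t = 23 := by
    have := piece 14 16 9.8 1.7 (by norm_num) ?_
    · rw [this]; norm_num
    · intro t ht; simp only [Set.mem_Icc] at ht; unfold Vout
      rcases eq_or_lt_of_le ht.1 with h | h
      · rw [if_neg (by linarith), if_neg (by linarith), if_neg (by linarith),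
          if_neg (by linarith), if_neg (by linarith), if_pos (by linarith)]
        rw [← h]; norm_num
      · rw [if_neg (by linarith), if_neg (by linarith), if_neg (by linarith),
          if_neg (by linarith), if_neg (by linarith), if_neg (by linarith), if_pos ht.2]
  have e8 : ∫ t in (16:ℝ)..18, Vout t = 27.4 := by
    have := piece 16 18 13.2 0.5 (by norm_num) ?_
    · rw [this]; norm_num
    · intro t ht; simp only [Set.mem_Icc] at ht; unfold Vout
      rcases eq_or_lt_of_le ht.1 with h | h
      · rw [if_neg (by linarith), if_neg (by linarith), if_neg (by linarith),
          if_neg (by linarith), if_neg (by linarith), if_neg (by linarith),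
          if_pos (by linarith)]; rw [← h]; norm_num
      · rw [if_neg (by linarith), if_neg (by linarith), if_neg (by linarith),
          if_neg (by linarith), if_neg (by linarith), if_neg (by linarith),
          if_neg (by linarith), if_pos ht.2]
  have e9 : ∫ t in (18:ℝ)..20, Vout t = 28.4 := by
    have := piece 18 20 14.2 0 (by norm_num) ?_
    · rw [this]; norm_num
    · intro t ht; simp only [Set.mem_Icc] at ht; unfold Vout
      rcases eq_or_lt_of_le ht.1 with h | h
      · rw [if_neg (by linarith), if_neg (by linarith), if_neg (by linarith),
          if_neg (by linarith), if_neg (by linarith), if_neg (by linarith),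
          if_neg (by linarith), if_pos (by linarith)]; rw [← h]; norm_num
      · rw [if_neg (by linarith), if_neg (by linarith), if_neg (by linarith),
          if_neg (by linarith), if_neg (by linarith), if_neg (by linarith),
          if_neg (by linarith), if_neg (by linarith)]; ring
  rw [← intervalIntegral.integral_add_adjacent_intervals (a := (0:ℝ)) (b := 2) (c := 20)
      (ii _ _) (ii _ _),
    ← intervalIntegral.integral_add_adjacent_intervals (a := (2:ℝ)) (b := 4) (c := 20)
      (ii _ _) (ii _ _),
    ← intervalIntegral.integral_add_adjacent_intervals (a := (4:ℝ)) (b := 8) (c := 20)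
      (ii _ _) (ii _ _),
    ← intervalIntegral.integral_add_adjacent_intervals (a := (8:ℝ)) (b := 10) (c := 20)
      (ii _ _) (ii _ _),
    ← intervalIntegral.integral_add_adjacent_intervals (a := (10:ℝ)) (b := 12) (c := 20)
      (ii _ _) (ii _ _),
    ← intervalIntegral.integral_add_adjacent_intervals (a := (12:ℝ)) (b := 14) (c := 20)
      (ii _ _) (ii _ _),
    ← intervalIntegral.integral_add_adjacent_intervals (a := (14:ℝ)) (b := 16) (c := 20)
      (ii _ _) (ii _ _),
    ← intervalIntegral.integral_add_adjacent_intervals (a := (16:ℝ)) (b := 18) (c := 20)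
      (ii _ _) (ii _ _),
    e1, e2, e3, e4, e5, e6, e7, e8, e9]
  norm_num

theorem stmt_12 (v₀ t₁ t₂ t₃ t₄ : ℝ)
    (h0 : 0 ≤ t₁) (h12 : t₁ ≤ t₂) (h23 : t₂ ≤ t₃) (h34 : t₃ ≤ t₄) (h4 : t₄ ≤ 20) :
    (1 / 20) * ∫ t in (0:ℝ)..20, (v₀ + Vin t t₁ t₂ t₃ t₄ - Vout t) =
      (20 * v₀ + 1.1 * (t₁ ^ 2 - t₂ ^ 2 + t₃ ^ 2 - t₄ ^ 2
        - 40 * t₁ + 40 * t₂ - 40 * t₃ + 40 * t₄) - 132.2) / 20 := by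
  have contVin : Continuous fun t => v₀ + Vin t t₁ t₂ t₃ t₄ := by
    unfold Vin; fun_prop
  rw [intervalIntegral.integral_sub (contVin.intervalIntegrable _ _)
    (cont_Vout.intervalIntegrable _ _), intVout]
  have hm : ∀ a : ℝ, IntervalIntegrable (fun t => min t a) MeasureTheory.volume 0 20 :=
    fun a => (continuous_id.min continuous_const).intervalIntegrable _ _
  unfold Vin
  rw [intervalIntegral.integral_add (continuous_const.intervalIntegrable _ _) (by
      apply Continuous.intervalIntegrable; fun_prop),
    intervalIntegral.integral_const,
    intervalIntegral.integral_const_mul,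
    intervalIntegral.integral_add ((hm t₂).sub (hm t₁)) ((hm t₄).sub (hm t₃)),
    intervalIntegral.integral_sub (hm t₂) (hm t₁),
    intervalIntegral.integral_sub (hm t₄) (hm t₃),
    intmin t₁ h0 (by linarith), intmin t₂ (by linarith) (by linarith),
    intmin t₃ (by linarith) (by linarith), intmin t₄ (by linarith) h4]
  norm_num; ring
end

section
/- Let v₀ ∈ [5.1, 7.5] and set t₁ = (10v₀ − 25)/13, t₂ = (10v₀ + 1)/13, t₃ = (10v₀ + 153)/22, t₄ = 157/11. Then v(20) := v₀ + V_in(20; t₁,t₂,t₃,t₄) − 14.2 = 6.3 (independent of v₀), and furthermore (1300·(6.3)² + 20420·(6.3) + 634817)/114400 = 40753/5720. -/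
theorem stmt_13 (v₀ : ℝ) (hv₀ : 5.1 ≤ v₀ ∧ v₀ ≤ 7.5) :
    v₀ + Vin 20 ((10 * v₀ - 25) / 13) ((10 * v₀ + 1) / 13) ((10 * v₀ + 153) / 22)
        (157 / 11) - 14.2 = 6.3 ∧
    (1300 * (6.3 : ℝ) ^ 2 + 20420 * 6.3 + 634817) / 114400 = 40753 / 5720 := by
  obtain ⟨h1, h2⟩ := hv₀
  have m1 : min (20:ℝ) ((10 * v₀ - 25) / 13) = (10 * v₀ - 25) / 13 :=
    min_eq_right (by linarith)
  have m2 : min (20:ℝ) ((10 * v₀ + 1) / 13) = (10 * v₀ + 1) / 13 :=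
    min_eq_right (by linarith)
  have m3 : min (20:ℝ) ((10 * v₀ + 153) / 22) = (10 * v₀ + 153) / 22 :=
    min_eq_right (by linarith)
  have m4 : min (20:ℝ) ((157:ℝ) / 11) = 157 / 11 := min_eq_right (by norm_num)
  constructor
  · rw [Vin, m1, m2, m3, m4]; ring
  · norm_num
end

section
/- Let v₀ ∈ [5.1, 7.5] and set t₁ = (10v₀ − 25)/13, t₂ = (10v₀ + 1)/13, t₃ = (10v₀ + 153)/22, t₄ = 157/11. Define v(t) = v₀ + V_in(t; t₁,t₂,t₃,t₄) − V_out(t) for t ∈ [0,20], where V_out is the nominal consumption function. Then (1/20)·∫₀²⁰ v(t) dt = (1300·v₀² + 20420·v₀ + 634817)/114400. -/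
open MeasureTheory

lemma von1 : ∀ t ∈ Set.Icc (0:ℝ) 2, Vout t = 0 + 0 * t := by
  intro t ht; unfold Vout; split_ifs <;> linarith [ht.1, ht.2]

lemma von2 : ∀ t ∈ Set.Icc (2:ℝ) 4, Vout t = -2.4 + 1.2 * t := by
  intro t ht; unfold Vout; split_ifs <;> linarith [ht.1, ht.2]

lemma von3 : ∀ t ∈ Set.Icc (4:ℝ) 8, Vout t = 2.4 + 0 * t := by
  intro t ht; unfold Vout; split_ifs <;> linarith [ht.1, ht.2]

lemma von4 : ∀ t ∈ Set.Icc (8:ℝ) 10, Vout t = -7.2 + 1.2 * t := by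
  intro t ht; unfold Vout; split_ifs <;> linarith [ht.1, ht.2]

lemma von5 : ∀ t ∈ Set.Icc (10:ℝ) 12, Vout t = -20.2 + 2.5 * t := by
  intro t ht; unfold Vout; split_ifs <;> linarith [ht.1, ht.2]

lemma von6 : ∀ t ∈ Set.Icc (12:ℝ) 14, Vout t = 9.8 + 0 * t := by
  intro t ht; unfold Vout; split_ifs <;> linarith [ht.1, ht.2]

lemma von7 : ∀ t ∈ Set.Icc (14:ℝ) 16, Vout t = -14 + 1.7 * t := by
  intro t ht; unfold Vout; split_ifs <;> linarith [ht.1, ht.2]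

lemma von8 : ∀ t ∈ Set.Icc (16:ℝ) 18, Vout t = 5.2 + 0.5 * t := by
  intro t ht; unfold Vout; split_ifs <;> linarith [ht.1, ht.2]

lemma von9 : ∀ t ∈ Set.Icc (18:ℝ) 20, Vout t = 14.2 + 0 * t := by
  intro t ht; unfold Vout; split_ifs <;> linarith [ht.1, ht.2]

lemma lin_int (α β a b : ℝ) :
    ∫ t in a..b, (α + β * t) = α * (b - a) + β * (b ^ 2 - a ^ 2) / 2 := by
  rw [intervalIntegral.integral_add (intervalIntegrable_const)
    ((by fun_prop : Continuous fun t : ℝ => β * t).intervalIntegrable a b),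
    intervalIntegral.integral_const, intervalIntegral.integral_const_mul, integral_id,
    smul_eq_mul]
  ring

lemma piece {a b α β : ℝ} (hab : a ≤ b)
    (hg : ∀ t ∈ Set.Icc a b, Vout t = α + β * t) :
    IntervalIntegrable Vout volume a b ∧
      ∫ t in a..b, Vout t = α * (b - a) + β * (b ^ 2 - a ^ 2) / 2 := by
  have hsub : Set.uIoc a b ⊆ Set.Icc a b := by
    rw [Set.uIoc_of_le hab]; exact Set.Ioc_subset_Icc_self
  constructor
  · refine ((by fun_prop : Continuous fun t : ℝ => α + β * t).intervalIntegrable a b).congr ?_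
    exact fun t ht => (hg t (hsub ht)).symm
  · rw [intervalIntegral.integral_congr (g := fun t => α + β * t)
      (fun t ht => hg t (by rwa [Set.uIcc_of_le hab] at ht)), lin_int]

lemma vout_int :
    IntervalIntegrable Vout volume 0 20 ∧ ∫ t in (0:ℝ)..20, Vout t = 132.2 := by
  have p1 := piece (by norm_num) von1
  have p2 := piece (by norm_num) von2
  have p3 := piece (by norm_num) von3
  have p4 := piece (by norm_num) von4
  have p5 := piece (by norm_num) von5
  have p6 := piece (by norm_num) von6
  have p7 := piece (by norm_num) von7
  have p8 := piece (by norm_num) von8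
  have p9 := piece (by norm_num) von9
  have i12 := p1.1.trans p2.1
  have i14 := i12.trans p3.1
  have i15 := i14.trans p4.1
  have i16 := i15.trans p5.1
  have i17 := i16.trans p6.1
  have i18 := i17.trans p7.1
  have i19 := i18.trans p8.1
  refine ⟨i19.trans p9.1, ?_⟩
  rw [← intervalIntegral.integral_add_adjacent_intervals i19 p9.1,
      ← intervalIntegral.integral_add_adjacent_intervals i18 p8.1,
      ← intervalIntegral.integral_add_adjacent_intervals i17 p7.1,
      ← intervalIntegral.integral_add_adjacent_intervals i16 p6.1,
      ← intervalIntegral.integral_add_adjacent_intervals i15 p5.1,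
      ← intervalIntegral.integral_add_adjacent_intervals i14 p4.1,
      ← intervalIntegral.integral_add_adjacent_intervals i12 p3.1,
      ← intervalIntegral.integral_add_adjacent_intervals p1.1 p2.1,
      p1.2, p2.2, p3.2, p4.2, p5.2, p6.2, p7.2, p8.2, p9.2]
  norm_num

lemma int_min (c : ℝ) (h0 : 0 ≤ c) (h1 : c ≤ 20) :
    ∫ t in (0:ℝ)..20, min t c = 20 * c - c ^ 2 / 2 := by
  have hi : ∀ a b : ℝ, IntervalIntegrable (fun t => min t c) volume a b :=
    fun a b => (continuous_id.min continuous_const).intervalIntegrable a b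
  rw [← intervalIntegral.integral_add_adjacent_intervals (hi 0 c) (hi c 20)]
  have e1 : ∫ t in (0:ℝ)..c, min t c = ∫ t in (0:ℝ)..c, t :=
    intervalIntegral.integral_congr fun t ht =>
      min_eq_left (by rw [Set.uIcc_of_le h0] at ht; exact ht.2)
  have e2 : (∫ t in c..(20:ℝ), min t c) = ∫ _ in c..(20:ℝ), c :=
    intervalIntegral.integral_congr fun t ht =>
      min_eq_right (by rw [Set.uIcc_of_le h1] at ht; exact ht.1)
  rw [e1, e2, integral_id, intervalIntegral.integral_const, smul_eq_mul]
  ring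

theorem stmt_14 (v₀ : ℝ) (hv₀ : 5.1 ≤ v₀ ∧ v₀ ≤ 7.5) :
    (1 / 20) * ∫ t in (0:ℝ)..20,
        (v₀ + Vin t ((10 * v₀ - 25) / 13) ((10 * v₀ + 1) / 13)
          ((10 * v₀ + 153) / 22) (157 / 11) - Vout t) =
      (1300 * v₀ ^ 2 + 20420 * v₀ + 634817) / 114400 := by
  obtain ⟨hl, hr⟩ := hv₀
  have hl' : (5.1 : ℝ) ≤ v₀ := hl
  have hr' : v₀ ≤ (7.5 : ℝ) := hr
  norm_num at hl' hr'
  set t₁ := (10 * v₀ - 25) / 13 with ht₁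
  set t₂ := (10 * v₀ + 1) / 13 with ht₂
  set t₃ := (10 * v₀ + 153) / 22 with ht₃
  set t₄ := (157 : ℝ) / 11 with ht₄
  have hm : ∀ c : ℝ, IntervalIntegrable (fun t => min t c) volume 0 20 :=
    fun c => (continuous_id.min continuous_const).intervalIntegrable 0 20
  have hcont : Continuous fun t => v₀ + Vin t t₁ t₂ t₃ t₄ := by
    unfold Vin; fun_prop
  rw [intervalIntegral.integral_sub (hcont.intervalIntegrable 0 20) vout_int.1, vout_int.2]
  have hsplit : (fun t => v₀ + Vin t t₁ t₂ t₃ t₄) =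
      fun t => ((v₀ + 2.2 * min t t₂) + ((-2.2) * min t t₁ + 2.2 * min t t₄)) +
        (-2.2) * min t t₃ := by
    funext t; unfold Vin; ring
  rw [hsplit,
    intervalIntegral.integral_add
      ((intervalIntegrable_const.add ((hm t₂).const_mul 2.2)).add
        (((hm t₁).const_mul (-2.2)).add ((hm t₄).const_mul 2.2))) ((hm t₃).const_mul (-2.2)),
    intervalIntegral.integral_add (intervalIntegrable_const.add ((hm t₂).const_mul 2.2))
      (((hm t₁).const_mul (-2.2)).add ((hm t₄).const_mul 2.2)),
    intervalIntegral.integral_add intervalIntegrable_const ((hm t₂).const_mul 2.2),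
    intervalIntegral.integral_add ((hm t₁).const_mul (-2.2)) ((hm t₄).const_mul 2.2),
    intervalIntegral.integral_const_mul, intervalIntegral.integral_const_mul,
    intervalIntegral.integral_const_mul, intervalIntegral.integral_const_mul,
    intervalIntegral.integral_const, smul_eq_mul]
  rw [int_min t₁ (by rw [ht₁]; exact div_nonneg (by linarith) (by norm_num))
        (by rw [ht₁]; rw [div_le_iff₀ (by norm_num : (0:ℝ) < 13)]; linarith),
      int_min t₂ (by rw [ht₂]; exact div_nonneg (by linarith) (by norm_num))
        (by rw [ht₂]; rw [div_le_iff₀ (by norm_num : (0:ℝ) < 13)]; linarith),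
      int_min t₃ (by rw [ht₃]; exact div_nonneg (by linarith) (by norm_num))
        (by rw [ht₃]; rw [div_le_iff₀ (by norm_num : (0:ℝ) < 22)]; linarith),
      int_min t₄ (by norm_num) (by rw [ht₄]; norm_num)]
  rw [ht₁, ht₂, ht₃, ht₄]
  field_simp
  ring
end

section
/- For every v₀ ∈ [5.1, 7.5], (1300·v₀² + 20420·v₀ + 634817)/114400 ≤ 215273/28600, with equality exactly at v₀ = 7.5. Consequently the maximum of V_aav over [5.1, 7.5] equals 215273/28600. -/
theorem stmt_15 :
    (∀ v₀ : ℝ, 5.1 ≤ v₀ → v₀ ≤ 7.5 →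
      ((1300 * v₀ ^ 2 + 20420 * v₀ + 634817) / 114400 ≤ 215273 / 28600 ∧
        ((1300 * v₀ ^ 2 + 20420 * v₀ + 634817) / 114400 = 215273 / 28600 ↔ v₀ = 7.5))) ∧
    IsGreatest ((fun v₀ : ℝ => (1300 * v₀ ^ 2 + 20420 * v₀ + 634817) / 114400) ''
      Set.Icc 5.1 7.5) (215273 / 28600) := by
  have key : ∀ v₀ : ℝ, 5.1 ≤ v₀ → v₀ ≤ 7.5 →
      ((1300 * v₀ ^ 2 + 20420 * v₀ + 634817) / 114400 ≤ 215273 / 28600 ∧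
        ((1300 * v₀ ^ 2 + 20420 * v₀ + 634817) / 114400 = 215273 / 28600 ↔ v₀ = 7.5)) := by
    intro v h1 h2
    constructor
    · nlinarith [mul_nonneg (sub_nonneg.mpr h2) (by nlinarith : (0:ℝ) ≤ 1300 * v + 30170)]
    · constructor
      · intro heq
        have hf : (v - 7.5) * (1300 * v + 30170) = 0 := by linear_combination 114400 * heq
        have hpos : (1300 : ℝ) * v + 30170 > 0 := by nlinarith
        have := mul_eq_zero.mp hf
        rcases this with h | h
        · linarith
        · linarith
      · intro h; subst h; norm_num
  refine ⟨key, ⟨⟨7.5, ⟨by norm_num, le_refl _⟩, by norm_num⟩, ?_⟩⟩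
  rintro y ⟨v, ⟨hv1, hv2⟩, rfl⟩
  exact (key v hv1 hv2).1
end

section
/- Let δ = 0.015 and ε = 0.06. Let t ∈ [0,20], let t₁ ≤ t₂ ≤ t₃ ≤ t₄ ≤ t₅ ≤ t₆ and s₁ ≤ s₂ ≤ s₃ ≤ s₄ ≤ s₅ ≤ s₆ be two nondecreasing sextuples of reals with |tᵢ − sᵢ| ≤ δ for i = 1,…,6, and let v₀, w₀ be reals with |v₀ − w₀| ≤ ε. Then |(v₀ + V_in⁶(t; t₁,…,t₆)) − (w₀ + V_in⁶(t; s₁,…,s₆))| ≤ 13.2·δ + ε, and 13.2·δ + ε < 0.3. -/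
/-- Volume of oil pumped in by time `t` with three activations during
`[t₁,t₂] ∪ [t₃,t₄] ∪ [t₅,t₆]` at rate 2.2 l/s. -/
noncomputable def Vin6 (t t₁ t₂ t₃ t₄ t₅ t₆ : ℝ) : ℝ :=
  2.2 * ((min t t₂ - min t t₁) + (min t t₄ - min t t₃) + (min t t₆ - min t t₅))

lemma min_abs_le (t a b : ℝ) (h : |a - b| ≤ 0.015) : |min t a - min t b| ≤ 0.015 := by
  have := abs_min_sub_min_le_max t a t b
  rw [sub_self, abs_zero, max_eq_right (abs_nonneg _)] at this
  linarith

theorem stmt_17 (t t₁ t₂ t₃ t₄ t₅ t₆ s₁ s₂ s₃ s₄ s₅ s₆ v₀ w₀ : ℝ)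
    (ht : 0 ≤ t ∧ t ≤ 20)
    (ht12 : t₁ ≤ t₂) (ht23 : t₂ ≤ t₃) (ht34 : t₃ ≤ t₄) (ht45 : t₄ ≤ t₅) (ht56 : t₅ ≤ t₆)
    (hs12 : s₁ ≤ s₂) (hs23 : s₂ ≤ s₃) (hs34 : s₃ ≤ s₄) (hs45 : s₄ ≤ s₅) (hs56 : s₅ ≤ s₆)
    (h1 : |t₁ - s₁| ≤ 0.015) (h2 : |t₂ - s₂| ≤ 0.015) (h3 : |t₃ - s₃| ≤ 0.015)
    (h4 : |t₄ - s₄| ≤ 0.015) (h5 : |t₅ - s₅| ≤ 0.015) (h6 : |t₆ - s₆| ≤ 0.015)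
    (hv : |v₀ - w₀| ≤ 0.06) :
    |(v₀ + Vin6 t t₁ t₂ t₃ t₄ t₅ t₆) - (w₀ + Vin6 t s₁ s₂ s₃ s₄ s₅ s₆)| ≤
      13.2 * 0.015 + 0.06 ∧
    (13.2 : ℝ) * 0.015 + 0.06 < 0.3 := by
  refine ⟨?_, by norm_num⟩
  have m1 := min_abs_le t t₁ s₁ h1
  have m2 := min_abs_le t t₂ s₂ h2
  have m3 := min_abs_le t t₃ s₃ h3
  have m4 := min_abs_le t t₄ s₄ h4
  have m5 := min_abs_le t t₅ s₅ h5
  have m6 := min_abs_le t t₆ s₆ h6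
  unfold Vin6
  rw [abs_le] at m1 m2 m3 m4 m5 m6 hv ⊢
  constructor <;> linarith [m1.1, m1.2, m2.1, m2.2, m3.1, m3.2, m4.1, m4.2, m5.1, m5.2, m6.1, m6.2, hv.1, hv.2]
end
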